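/- Let Λ = KQ/I be a tame finite-dimensional algebra with Gabriel quiver Q. Then for any two vertices i and j of Q there are at most two arrows from i to j. -/

import Mathlib

/-!
Background definitions: finite quivers, paths, bound quiver algebras with a fixed
admissible presentation by a quiver and minimal relations, tame/symmetric algebras,
syzygies and Ω-periodicity for right modules, etc.
-/

/-- A finite quiver. -/
structure FinQuiv : Type 1 where
  V : Type
  A : Type
  [fintypeV : Fintype V]
  [fintypeA : Fintype A]
  [decEqV : DecidableEq V]
  [decEqA : DecidableEq A]
  s : A → V
  t : A → V

attribute [instance] FinQuiv.fintypeV FinQuiv.fintypeA FinQuiv.decEqV FinQuiv.decEqA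

namespace FinQuiv

/-- Paths in a quiver, with a given source and target. -/
inductive Path (Q : FinQuiv) : Q.V → Q.V → Type
  | nil (v : Q.V) : Path Q v v
  | cons {v w : Q.V} (a : Q.A) (hs : Q.s a = v) (p : Path Q (Q.t a) w) : Path Q v w

/-- The length of a path. -/
def pathLength {Q : FinQuiv} : {u v : Q.V} → Path Q u v → ℕ
  | _, _, .nil _ => 0
  | _, _, .cons _ _ p => pathLength p + 1

/-- Concatenation of paths. -/
def pathComp {Q : FinQuiv} : {u v w : Q.V} → Path Q u v → Path Q v w → Path Q u w
  | _, _, _, .nil _, q => q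
  | _, _, _, .cons a hs p, q => .cons a hs (pathComp p q)

/-- A path together with its source and target. -/
def TotalPath (Q : FinQuiv) : Type := Σ u : Q.V, Σ v : Q.V, Path Q u v

/-- Source of a total path. -/
def TotalPath.src {Q : FinQuiv} (p : TotalPath Q) : Q.V := p.1

/-- Target of a total path. -/
def TotalPath.tgt {Q : FinQuiv} (p : TotalPath Q) : Q.V := p.2.1

/-- Length of a total path. -/
def TotalPath.len {Q : FinQuiv} (p : TotalPath Q) : ℕ := pathLength p.2.2

/-- Concatenation of total paths, when the endpoints match. -/
noncomputable def TotalPath.comp? {Q : FinQuiv} (p q : TotalPath Q) : Option (TotalPath Q) :=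
  if h : p.2.1 = q.1 then
    some ⟨p.1, q.2.1, pathComp p.2.2 (cast (by rw [h]) q.2.2)⟩
  else none

/-- The path consisting of a single arrow. -/
def tp1 (Q : FinQuiv) (a : Q.A) : TotalPath Q :=
  ⟨Q.s a, Q.t a, .cons a rfl (.nil (Q.t a))⟩

/-- The length 2 path given by two composable arrows. -/
def tp2 (Q : FinQuiv) (a b : Q.A) (h : Q.t a = Q.s b) : TotalPath Q :=
  ⟨Q.s a, Q.t b, .cons a rfl (.cons b h.symm (.nil (Q.t b)))⟩

/-- The length 3 path given by three composable arrows. -/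
def tp3 (Q : FinQuiv) (a b c : Q.A) (hab : Q.t a = Q.s b) (hbc : Q.t b = Q.s c) : TotalPath Q :=
  ⟨Q.s a, Q.t c, .cons a rfl (.cons b hab.symm (.cons c hbc.symm (.nil (Q.t c))))⟩

/-- The number of arrows of `Q` ending at `v`. -/
def inDeg (Q : FinQuiv) (v : Q.V) : ℕ := (Finset.univ.filter fun a => Q.t a = v).card

/-- The number of arrows of `Q` starting at `v`. -/
def outDeg (Q : FinQuiv) (v : Q.V) : ℕ := (Finset.univ.filter fun a => Q.s a = v).card

/-- A `1`-regular vertex. -/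
def IsOneReg (Q : FinQuiv) (v : Q.V) : Prop := inDeg Q v = 1 ∧ outDeg Q v = 1

/-- A `2`-regular vertex. -/
def IsTwoReg (Q : FinQuiv) (v : Q.V) : Prop := inDeg Q v = 2 ∧ outDeg Q v = 2

/-- A quiver is biregular if every vertex is `1`-regular or `2`-regular. -/
def Biregular (Q : FinQuiv) : Prop := ∀ v : Q.V, IsOneReg Q v ∨ IsTwoReg Q v

end FinQuiv

open FinQuiv

/-- The vector space of the path algebra `KQ` : formal `K`-linear combinations of paths. -/
abbrev KQMod (K : Type) [Field K] (Q : FinQuiv) : Type := TotalPath Q →₀ K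

/-- Left multiplication of a formal linear combination of paths by a path. -/
noncomputable def pmul {K : Type} [Field K] {Q : FinQuiv} (p : TotalPath Q)
    (x : KQMod K Q) : KQMod K Q :=
  x.sum fun w c =>
    match TotalPath.comp? p w with
    | some pw => Finsupp.single pw c
    | none => 0

/-- Right multiplication of a formal linear combination of paths by a path. -/
noncomputable def rmul {K : Type} [Field K] {Q : FinQuiv} (q : TotalPath Q)
    (x : KQMod K Q) : KQMod K Q :=
  x.sum fun w c =>
    match TotalPath.comp? w q with
    | some wq => Finsupp.single wq c
    | none => 0

/-- The two-sided ideal of `KQ` generated by a set of elements. -/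
noncomputable def idealSpan (K : Type) [Field K] (Q : FinQuiv) (R : Set (KQMod K Q)) :
    Submodule K (KQMod K Q) :=
  Submodule.span K {x | ∃ r ∈ R, ∃ p q : TotalPath Q, x = pmul p (rmul q r)}

/-- Evaluation of a path in an algebra, given images of trivial paths and arrows. -/
noncomputable def pathEval {Q : FinQuiv} {Λ : Type} [Ring Λ] (e : Q.V → Λ)
    (arrow : Q.A → Λ) : {u v : Q.V} → Path Q u v → Λ
  | _, _, .nil v => e v
  | _, _, .cons a _ p => arrow a * pathEval e arrow p

/-- Evaluation of a total path in an algebra. -/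
noncomputable def pathEvalT {Q : FinQuiv} {Λ : Type} [Ring Λ] (e : Q.V → Λ)
    (arrow : Q.A → Λ) (w : TotalPath Q) : Λ :=
  pathEval e arrow w.2.2

/-- Evaluation of a formal linear combination of paths in an algebra. -/
noncomputable def evalFun {Q : FinQuiv} {Λ : Type} [Ring Λ] {K : Type} [Field K]
    [Algebra K Λ] (e : Q.V → Λ) (arrow : Q.A → Λ) (x : KQMod K Q) : Λ :=
  x.sum fun w c => c • pathEvalT e arrow w

/-- An admissible presentation `Λ ≅ KQ/I` of an algebra `Λ` by the quiver `Q` and a fixed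
set of minimal relations generating the admissible ideal `I`.  Since `I` is admissible,
`Q` is the Gabriel quiver of `Λ`. -/
structure AdmissiblePresentation (K : Type) [Field K] (Q : FinQuiv) (Λ : Type) [Ring Λ]
    [Algebra K Λ] : Type where
  /-- images of the trivial paths: a complete set of orthogonal primitive idempotents -/
  e : Q.V → Λ
  /-- images of the arrows -/
  arrow : Q.A → Λ
  idem : ∀ v, e v * e v = e v
  orth : ∀ v w, v ≠ w → e v * e w = 0
  sum_e : (∑ v, e v) = 1
  arrow_mem : ∀ a, e (Q.s a) * arrow a * e (Q.t a) = arrow a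
  /-- the fixed set of minimal relations -/
  rels : Set (KQMod K Q)
  rels_finite : rels.Finite
  rels_parallel : ∀ ρ ∈ rels, ∀ w ∈ ρ.support, ∀ w' ∈ ρ.support,
    TotalPath.src w = TotalPath.src w' ∧ TotalPath.tgt w = TotalPath.tgt w'
  rels_len : ∀ ρ ∈ rels, ∀ w ∈ ρ.support, 2 ≤ TotalPath.len w
  rels_ne : ∀ ρ ∈ rels, ρ ≠ 0
  rels_minimal : ∀ ρ ∈ rels, ρ ∉ idealSpan K Q (rels \ {ρ})
  spanning : Submodule.span K (Set.range (pathEvalT e arrow)) = ⊤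
  ker_eq : ∀ x : KQMod K Q, evalFun e arrow x = 0 ↔ x ∈ idealSpan K Q rels
  admissible : ∃ m : ℕ, ∀ w : TotalPath Q, m ≤ TotalPath.len w → pathEvalT e arrow w = 0

/-- `w ≺ I` : the path `w` occurs as a summand of one of the fixed minimal relations. -/
def AdmissiblePresentation.Prec {K : Type} [Field K] {Q : FinQuiv} {Λ : Type} [Ring Λ]
    [Algebra K Λ] (P : AdmissiblePresentation K Q Λ) (w : TotalPath Q) : Prop :=
  ∃ ρ ∈ P.rels, w ∈ ρ.support

/-- An algebra is symmetric if it carries a non-degenerate associative symmetric bilinear form. -/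
def IsSymmetricAlg (K : Type) [Field K] (Λ : Type) [Ring Λ] [Algebra K Λ] : Prop :=
  ∃ B : Λ →ₗ[K] Λ →ₗ[K] K,
    (∀ x y, B x y = B y x) ∧ (∀ x y z, B (x * y) z = B x (y * z)) ∧
    (∀ x, (∀ y, B x y = 0) → x = 0)

/-- An algebra is indecomposable (connected) if it is nonzero and has no nontrivial
central idempotents. -/
def IndecAlg (Λ : Type) [Ring Λ] : Prop :=
  (0 : Λ) ≠ 1 ∧ ∀ z : Λ, z * z = z → (∀ x, z * x = x * z) → z = 0 ∨ z = 1

/-- An indecomposable (right) module: nonzero, with no nontrivial direct sum decomposition. -/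
def IndecMod {Λ : Type} [Ring Λ] (N : ModuleCat.{0} Λᵐᵒᵖ) : Prop :=
  Nontrivial N ∧ ∀ U V : Submodule Λᵐᵒᵖ N, IsCompl U V → U = ⊥ ∨ V = ⊥

/-- The dimension over `K` of a module over a `K`-algebra. -/
noncomputable def kdim (K : Type) [Field K] {Λ : Type} [Ring Λ] [Algebra K Λ]
    (N : ModuleCat.{0} Λᵐᵒᵖ) : ℕ :=
  letI : Module K N := Module.compHom N (algebraMap K Λᵐᵒᵖ)
  Module.finrank K N

/-- `Λ` has infinite representation type: no finite list of modules exhausts all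
finite-dimensional indecomposable right `Λ`-modules up to isomorphism. -/
def RepInfinite (Λ : Type) [Ring Λ] : Prop :=
  ∀ (n : ℕ) (F : Fin n → ModuleCat.{0} Λᵐᵒᵖ),
    ∃ N : ModuleCat.{0} Λᵐᵒᵖ, Module.Finite Λᵐᵒᵖ N ∧ IndecMod N ∧
      ∀ i : Fin n, IsEmpty (N ≃ₗ[Λᵐᵒᵖ] F i)

/-- The `K[x]`-`Λ`-bimodules parametrising one-parameter families of modules
in the definition of tameness; they are finitely generated free over `K[x]`. -/
structure TameWitness (K : Type) [Field K] (Λ : Type) [Ring Λ] [Algebra K Λ] : Type 1 where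
  M : Type
  [acg : AddCommGroup M]
  [modP : Module (Polynomial K) M]
  [modL : Module Λᵐᵒᵖ M]
  [comm : SMulCommClass (Polynomial K) Λᵐᵒᵖ M]
  free : Module.Free (Polynomial K) M
  finite : Module.Finite (Polynomial K) M
  compat : ∀ (c : K) (m : M), (Polynomial.C c) • m = (MulOpposite.op (algebraMap K Λ c)) • m

attribute [instance] TameWitness.acg TameWitness.modP TameWitness.modL TameWitness.comm

/-- Multiplication by `x - λ` on a `K[x]`-`Λ`-bimodule, as a map of right `Λ`-modules. -/
noncomputable def polyShift {K : Type} [Field K] {Λ : Type} [Ring Λ] {M : Type}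
    [AddCommGroup M] [Module (Polynomial K) M] [Module Λᵐᵒᵖ M]
    [SMulCommClass (Polynomial K) Λᵐᵒᵖ M] (lam : K) : M →ₗ[Λᵐᵒᵖ] M where
  toFun m := (Polynomial.X - Polynomial.C lam) • m
  map_add' _ _ := smul_add _ _ _
  map_smul' r m := by simpa using smul_comm (Polynomial.X - Polynomial.C lam) r m

/-- Drozd tameness: for each dimension `d` there are finitely many `K[x]`-`Λ`-bimodules,
finitely generated free over `K[x]`, such that every indecomposable `d`-dimensional right
`Λ`-module is a specialization `K[x]/(x-λ) ⊗ M` of one of them. -/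
def IsTame (K : Type) [Field K] (Λ : Type) [Ring Λ] [Algebra K Λ] : Prop :=
  ∀ d : ℕ, ∃ (n : ℕ) (W : Fin n → TameWitness K Λ),
    ∀ N : ModuleCat.{0} Λᵐᵒᵖ, Module.Finite Λᵐᵒᵖ N → IndecMod N → kdim K N = d →
      ∃ (i : Fin n) (lam : K),
        Nonempty (N ≃ₗ[Λᵐᵒᵖ]
          ((W i).M ⧸ LinearMap.range (polyShift (K := K) (Λ := Λ) (M := (W i).M) lam)))

/-- `N` is a syzygy of `M` : the kernel of a projective cover of `M`. -/
def IsSyzygy {Λ : Type} [Ring Λ] (N M : ModuleCat.{0} Λᵐᵒᵖ) : Prop :=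
  ∃ (P : ModuleCat.{0} Λᵐᵒᵖ) (f : P →ₗ[Λᵐᵒᵖ] M),
    Module.Projective Λᵐᵒᵖ P ∧ Function.Surjective f ∧
    (∀ L : Submodule Λᵐᵒᵖ P, L ⊔ LinearMap.ker f = ⊤ → L = ⊤) ∧
    Nonempty (N ≃ₗ[Λᵐᵒᵖ] LinearMap.ker f)

/-- `N ≅ Ω^n(M)`. -/
def IsNSyzygy {Λ : Type} [Ring Λ] : ℕ → ModuleCat.{0} Λᵐᵒᵖ → ModuleCat.{0} Λᵐᵒᵖ → Prop
  | 0, N, M => Nonempty (N ≃ₗ[Λᵐᵒᵖ] M)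
  | n + 1, N, M => ∃ X : ModuleCat.{0} Λᵐᵒᵖ, IsSyzygy X M ∧ IsNSyzygy n N X

/-- `M` is `Ω`-periodic of period exactly `n`. -/
def IsPeriodicOfPeriod {Λ : Type} [Ring Λ] (M : ModuleCat.{0} Λᵐᵒᵖ) (n : ℕ) : Prop :=
  1 ≤ n ∧ IsNSyzygy n M M ∧ ∀ m : ℕ, 1 ≤ m → m < n → ¬ IsNSyzygy m M M

/-- All simple right `Λ`-modules are `Ω`-periodic of period exactly `4`. -/
def SimplesPeriodFour (Λ : Type) [Ring Λ] : Prop :=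
  ∀ S : ModuleCat.{0} Λᵐᵒᵖ, IsSimpleModule Λᵐᵒᵖ S → IsPeriodicOfPeriod S 4

/-- `S` is (isomorphic to) the simple module `S_i` at the vertex `i`. -/
def IsSimpleAt {K : Type} [Field K] {Q : FinQuiv} {Λ : Type} [Ring Λ] [Algebra K Λ]
    (P : AdmissiblePresentation K Q Λ) (i : Q.V) (S : ModuleCat.{0} Λᵐᵒᵖ) : Prop :=
  IsSimpleModule Λᵐᵒᵖ S ∧ ∃ m : S, (MulOpposite.op (P.e i)) • m ≠ 0

/-- `dim_K (x · Λ · y)`, giving the entries of the Cartan matrix when `x`, `y` are the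
idempotents at two vertices. -/
noncomputable def cornerDim (K : Type) [Field K] {Λ : Type} [Ring Λ] [Algebra K Λ]
    (x y : Λ) : ℕ :=
  Module.finrank K (LinearMap.range ((LinearMap.mulLeft K x).comp (LinearMap.mulRight K y)))

/-- `dim_K (x · Λ)`, the dimension of the projective module `xΛ` for an idempotent `x`. -/
noncomputable def projDim (K : Type) [Field K] {Λ : Type} [Ring Λ] [Algebra K Λ]
    (x : Λ) : ℕ :=
  Module.finrank K (LinearMap.range (LinearMap.mulLeft K x))

/-! ### Auxiliary development for the proof -/

section Aux

open FinQuiv MulOpposite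

/-- A representation of the quiver data in a `K`-algebra `B`. -/
structure GoodRep (K : Type) [Field K] (Q : FinQuiv) (B : Type) [Ring B] [Algebra K B] where
  e : Q.V → B
  ar : Q.A → B
  idem : ∀ v, e v * e v = e v
  orth : ∀ v w, v ≠ w → e v * e w = 0
  sum_e : (∑ v, e v) = 1
  sandwich : ∀ x, e (Q.s x) * ar x * e (Q.t x) = ar x

variable {K : Type} [Field K] {Q : FinQuiv} {B : Type} [Ring B] [Algebra K B]

namespace GoodRep

variable (R : GoodRep K Q B)

theorem e_mul_ar (x : Q.A) : R.e (Q.s x) * R.ar x = R.ar x := by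
  conv_lhs => rw [← R.sandwich x]
  rw [← mul_assoc, ← mul_assoc, R.idem]
  exact R.sandwich x

theorem ar_mul_e (x : Q.A) : R.ar x * R.e (Q.t x) = R.ar x := by
  conv_lhs => rw [← R.sandwich x]
  rw [mul_assoc, mul_assoc, R.idem, ← mul_assoc]
  exact R.sandwich x

theorem e_pathEval {u v : Q.V} (p : Path Q u v) :
    R.e u * pathEval R.e R.ar p = pathEval R.e R.ar p := by
  induction p with
  | nil w => exact R.idem w
  | cons a hs p ih =>
      subst hs
      show R.e (Q.s a) * (R.ar a * pathEval R.e R.ar p) = R.ar a * pathEval R.e R.ar p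
      rw [← mul_assoc, R.e_mul_ar]

theorem pathEval_e {u v : Q.V} (p : Path Q u v) :
    pathEval R.e R.ar p * R.e v = pathEval R.e R.ar p := by
  induction p with
  | nil w => exact R.idem w
  | cons a hs p ih =>
      show (R.ar a * pathEval R.e R.ar p) * R.e _ = R.ar a * pathEval R.e R.ar p
      rw [mul_assoc, ih]

theorem pathEval_comp {u v w : Q.V} (p : Path Q u v) (q : Path Q v w) :
    pathEval R.e R.ar (pathComp p q) = pathEval R.e R.ar p * pathEval R.e R.ar q := by
  induction p with
  | nil u => exact (R.e_pathEval q).symm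
  | cons a hs p ih =>
      show R.ar a * pathEval R.e R.ar (pathComp p q)
          = (R.ar a * pathEval R.e R.ar p) * pathEval R.e R.ar q
      rw [ih, mul_assoc]

theorem pathEvalT_comp {p w pw : TotalPath Q} (h : TotalPath.comp? p w = some pw) :
    pathEvalT R.e R.ar pw = pathEvalT R.e R.ar p * pathEvalT R.e R.ar w := by
  obtain ⟨u, v, pp⟩ := p
  obtain ⟨u', v', qq⟩ := w
  unfold TotalPath.comp? at h
  by_cases hv : v = u'
  · subst hv
    rw [dif_pos rfl] at h
    cases h
    show pathEval R.e R.ar (pathComp pp (cast _ qq)) = _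
    rw [cast_eq, R.pathEval_comp]
    rfl
  · rw [dif_neg hv] at h
    cases h

theorem pathEvalT_mul_of_ne {p w : TotalPath Q} (h : p.2.1 ≠ w.1) :
    pathEvalT R.e R.ar p * pathEvalT R.e R.ar w = 0 := by
  obtain ⟨u, v, pp⟩ := p
  obtain ⟨u', v', qq⟩ := w
  show pathEval R.e R.ar pp * pathEval R.e R.ar qq = 0
  conv_lhs => rw [← R.pathEval_e pp, ← R.e_pathEval qq]
  rw [mul_assoc, ← mul_assoc (R.e v), R.orth v u' h, zero_mul, mul_zero]

end GoodRep

theorem comp?_eq_none_ne {p w : TotalPath Q} (h : TotalPath.comp? p w = none) :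
    p.2.1 ≠ w.1 := by
  intro heq
  unfold TotalPath.comp? at h
  rw [dif_pos heq] at h
  cases h

theorem pathComp_nil {u v : Q.V} (p : Path Q u v) : pathComp p (Path.nil v) = p := by
  induction p with
  | nil => rfl
  | cons a hs p ih =>
      show Path.cons a hs (pathComp p (Path.nil _)) = Path.cons a hs p
      rw [ih]

theorem comp?_nil_left (w : TotalPath Q) :
    TotalPath.comp? ⟨w.1, w.1, Path.nil w.1⟩ w = some w := by
  obtain ⟨u, v, pp⟩ := w
  unfold TotalPath.comp?
  rw [dif_pos rfl]
  simp only [cast_eq]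
  rfl

theorem comp?_nil_right (w : TotalPath Q) :
    TotalPath.comp? w ⟨w.2.1, w.2.1, Path.nil w.2.1⟩ = some w := by
  obtain ⟨u, v, pp⟩ := w
  unfold TotalPath.comp?
  rw [dif_pos rfl]
  simp only [cast_eq]
  refine congrArg some ?_
  exact congrArg (fun z => (⟨u, v, z⟩ : TotalPath Q)) (pathComp_nil pp)

/-! evalFun lemmas -/

theorem evalFun_zero {Λ : Type} [Ring Λ] [Algebra K Λ] (e : Q.V → Λ) (arrow : Q.A → Λ) :
    evalFun (K := K) e arrow 0 = 0 :=
  Finsupp.sum_zero_index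

theorem evalFun_single {Λ : Type} [Ring Λ] [Algebra K Λ] (e : Q.V → Λ) (arrow : Q.A → Λ)
    (w : TotalPath Q) (c : K) :
    evalFun e arrow (Finsupp.single w c) = c • pathEvalT e arrow w :=
  Finsupp.sum_single_index (zero_smul _ _)

theorem evalFun_add {Λ : Type} [Ring Λ] [Algebra K Λ] (e : Q.V → Λ) (arrow : Q.A → Λ)
    (x y : KQMod K Q) :
    evalFun e arrow (x + y) = evalFun e arrow x + evalFun e arrow y :=
  Finsupp.sum_add_index' (fun _ => zero_smul _ _) (fun _ b c => add_smul b c _)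

theorem evalFun_smul {Λ : Type} [Ring Λ] [Algebra K Λ] (e : Q.V → Λ) (arrow : Q.A → Λ)
    (c : K) (x : KQMod K Q) :
    evalFun e arrow (c • x) = c • evalFun e arrow x := by
  unfold evalFun
  rw [Finsupp.sum_smul_index (fun i => zero_smul K (pathEvalT e arrow i)), Finsupp.smul_sum]
  refine Finsupp.sum_congr fun w _ => ?_
  rw [mul_smul]

theorem evalFun_sub {Λ : Type} [Ring Λ] [Algebra K Λ] (e : Q.V → Λ) (arrow : Q.A → Λ)
    (x y : KQMod K Q) :
    evalFun e arrow (x - y) = evalFun e arrow x - evalFun e arrow y := by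
  have : x - y = x + (-1 : K) • y := by rw [neg_one_smul, ← sub_eq_add_neg]
  rw [this, evalFun_add, evalFun_smul, neg_one_smul, ← sub_eq_add_neg]

theorem evalFun_finset_sum {Λ : Type} [Ring Λ] [Algebra K Λ] (e : Q.V → Λ) (arrow : Q.A → Λ)
    {α : Type} (s : Finset α) (g : α → KQMod K Q) :
    evalFun e arrow (∑ a ∈ s, g a) = ∑ a ∈ s, evalFun e arrow (g a) := by
  classical
  induction s using Finset.induction_on with
  | empty => simpa using evalFun_zero (K := K) e arrow
  | insert _ _ hmem ih => rw [Finset.sum_insert hmem, Finset.sum_insert hmem, evalFun_add, ih]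

/-! pmul / rmul lemmas -/

theorem pmul_single_some {p w pw : TotalPath Q} (h : TotalPath.comp? p w = some pw) (c : K) :
    pmul p (Finsupp.single w c) = Finsupp.single pw c := by
  unfold pmul
  rw [Finsupp.sum_single_index]
  · simp only [h]
  · cases hc : TotalPath.comp? p w <;> simp [hc]

theorem pmul_single_none {p w : TotalPath Q} (h : TotalPath.comp? p w = none) (c : K) :
    pmul p (Finsupp.single w c) = 0 := by
  unfold pmul
  rw [Finsupp.sum_single_index]
  · simp only [h]
  · cases hc : TotalPath.comp? p w <;> simp [hc]

theorem pmul_add (p : TotalPath Q) (x y : KQMod K Q) :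
    pmul p (x + y) = pmul p x + pmul p y := by
  unfold pmul
  refine Finsupp.sum_add_index' (fun w => ?_) (fun w b c => ?_)
  · cases hc : TotalPath.comp? p w <;> simp [hc]
  · cases hc : TotalPath.comp? p w <;> simp [hc, Finsupp.single_add]

theorem rmul_single_some {q w wq : TotalPath Q} (h : TotalPath.comp? w q = some wq) (c : K) :
    rmul q (Finsupp.single w c) = Finsupp.single wq c := by
  unfold rmul
  rw [Finsupp.sum_single_index]
  · simp only [h]
  · cases hc : TotalPath.comp? w q <;> simp [hc]

theorem rmul_single_none {q w : TotalPath Q} (h : TotalPath.comp? w q = none) (c : K) :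
    rmul q (Finsupp.single w c) = 0 := by
  unfold rmul
  rw [Finsupp.sum_single_index]
  · simp only [h]
  · cases hc : TotalPath.comp? w q <;> simp [hc]

theorem rmul_add (q : TotalPath Q) (x y : KQMod K Q) :
    rmul q (x + y) = rmul q x + rmul q y := by
  unfold rmul
  refine Finsupp.sum_add_index' (fun w => ?_) (fun w b c => ?_)
  · cases hc : TotalPath.comp? w q <;> simp [hc]
  · cases hc : TotalPath.comp? w q <;> simp [hc, Finsupp.single_add]

theorem evalFun_pmul (R : GoodRep K Q B) (p : TotalPath Q) (x : KQMod K Q) :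
    evalFun R.e R.ar (pmul p x) = pathEvalT R.e R.ar p * evalFun R.e R.ar x := by
  induction x using Finsupp.induction with
  | zero =>
      show evalFun R.e R.ar (pmul p 0) = _
      have : pmul p (0 : KQMod K Q) = 0 := Finsupp.sum_zero_index
      rw [this, evalFun_zero, mul_zero]
  | single_add w c x hw hc ih =>
      rw [pmul_add, evalFun_add, evalFun_add, ih, mul_add]
      congr 1
      cases hcomp : TotalPath.comp? p w with
      | some pw =>
          rw [pmul_single_some hcomp, evalFun_single, evalFun_single,
            R.pathEvalT_comp hcomp, mul_smul_comm]
      | none =>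
          rw [pmul_single_none hcomp, evalFun_zero, evalFun_single, mul_smul_comm,
            R.pathEvalT_mul_of_ne (comp?_eq_none_ne hcomp), smul_zero]

theorem evalFun_rmul (R : GoodRep K Q B) (q : TotalPath Q) (x : KQMod K Q) :
    evalFun R.e R.ar (rmul q x) = evalFun R.e R.ar x * pathEvalT R.e R.ar q := by
  induction x using Finsupp.induction with
  | zero =>
      show evalFun R.e R.ar (rmul q 0) = _
      have : rmul q (0 : KQMod K Q) = 0 := Finsupp.sum_zero_index
      rw [this, evalFun_zero, zero_mul]
  | single_add w c x hw hc ih =>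
      rw [rmul_add, evalFun_add, evalFun_add, ih, add_mul]
      congr 1
      cases hcomp : TotalPath.comp? w q with
      | some wq =>
          rw [rmul_single_some hcomp, evalFun_single, evalFun_single,
            R.pathEvalT_comp hcomp, smul_mul_assoc]
      | none =>
          rw [rmul_single_none hcomp, evalFun_zero, evalFun_single, smul_mul_assoc,
            R.pathEvalT_mul_of_ne (comp?_eq_none_ne hcomp), smul_zero]

theorem evalFun_eq_zero_of_mem_idealSpan (R : GoodRep K Q B) {rels : Set (KQMod K Q)}
    (hrels : ∀ ρ ∈ rels, evalFun R.e R.ar ρ = 0) {x : KQMod K Q}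
    (hx : x ∈ idealSpan K Q rels) : evalFun R.e R.ar x = 0 := by
  refine Submodule.span_induction ?_ ?_ ?_ ?_ hx
  · rintro y ⟨r, hr, p, q, rfl⟩
    rw [evalFun_pmul, evalFun_rmul, hrels r hr, zero_mul, mul_zero]
  · exact evalFun_zero _ _
  · intro y z _ _ hy hz
    rw [evalFun_add, hy, hz, add_zero]
  · intro c y _ hy
    rw [evalFun_smul, hy, smul_zero]

/-- Multiplication on `KQMod`. -/
noncomputable def mulKQ (x y : KQMod K Q) : KQMod K Q :=
  x.sum fun w c => c • pmul w y

theorem evalFun_mulKQ (R : GoodRep K Q B) (x y : KQMod K Q) :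
    evalFun R.e R.ar (mulKQ x y) = evalFun R.e R.ar x * evalFun R.e R.ar y := by
  induction x using Finsupp.induction with
  | zero =>
      have : mulKQ (0 : KQMod K Q) y = 0 := Finsupp.sum_zero_index
      rw [this, evalFun_zero, zero_mul]
  | single_add w c x hw hc ih =>
      have hadd : mulKQ (Finsupp.single w c + x) y
          = mulKQ (Finsupp.single w c) y + mulKQ x y := by
        unfold mulKQ
        exact Finsupp.sum_add_index' (fun _ => zero_smul _ _) (fun _ b b' => add_smul b b' _)
      have hsingle : mulKQ (Finsupp.single w c) y = c • pmul w y :=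
        Finsupp.sum_single_index (zero_smul _ _)
      rw [hadd, hsingle, evalFun_add, evalFun_add, ih, evalFun_smul, evalFun_pmul,
        evalFun_single, add_mul, smul_mul_assoc]

/-! ### The universal property of an admissible presentation -/

section Univ

variable {K : Type} [Field K] {Q : FinQuiv} {Λ : Type} [Ring Λ] [Algebra K Λ]
variable {B : Type} [Ring B] [Algebra K B]

/-- The tautological representation attached to a presentation. -/
def AdmissiblePresentation.toGoodRep (P : AdmissiblePresentation K Q Λ) : GoodRep K Q Λ :=
  ⟨P.e, P.arrow, P.idem, P.orth, P.sum_e, P.arrow_mem⟩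

theorem AdmissiblePresentation.exists_eval (P : AdmissiblePresentation K Q Λ) (x : Λ) :
    ∃ ξ : KQMod K Q, evalFun P.e P.arrow ξ = x := by
  have hx : x ∈ Submodule.span K (Set.range (pathEvalT P.e P.arrow)) := by
    rw [P.spanning]; trivial
  refine Submodule.span_induction ?_ ?_ ?_ ?_ hx
  · rintro y ⟨w, rfl⟩
    exact ⟨Finsupp.single w 1, by rw [evalFun_single, one_smul]⟩
  · exact ⟨0, evalFun_zero _ _⟩
  · rintro y z _ _ ⟨ξ, rfl⟩ ⟨η, rfl⟩
    exact ⟨ξ + η, evalFun_add _ _ _ _⟩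
  · rintro c y _ ⟨ξ, rfl⟩
    exact ⟨c • ξ, evalFun_smul _ _ _ _⟩

theorem AdmissiblePresentation.mem_idealSpan_self (P : AdmissiblePresentation K Q Λ)
    {ρ : KQMod K Q} (hρ : ρ ∈ P.rels) : ρ ∈ idealSpan K Q P.rels := by
  obtain ⟨w₀, hw₀⟩ := Finsupp.support_nonempty_iff.mpr (P.rels_ne ρ hρ)
  refine Submodule.subset_span
    ⟨ρ, hρ, ⟨w₀.1, w₀.1, Path.nil w₀.1⟩, ⟨w₀.2.1, w₀.2.1, Path.nil w₀.2.1⟩, ?_⟩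
  have hr : rmul (⟨w₀.2.1, w₀.2.1, Path.nil w₀.2.1⟩ : FinQuiv.TotalPath Q) ρ = ρ := by
    unfold rmul
    have : ∀ w ∈ ρ.support,
        (TotalPath.comp? w (⟨w₀.2.1, w₀.2.1, Path.nil w₀.2.1⟩ : FinQuiv.TotalPath Q))
          = some w := by
      intro w hw
      have htgt : w.2.1 = w₀.2.1 := (P.rels_parallel ρ hρ w hw w₀ hw₀).2
      rw [← htgt]
      exact comp?_nil_right w
    calc (ρ.sum fun w c =>
            match TotalPath.comp? w (⟨w₀.2.1, w₀.2.1, Path.nil w₀.2.1⟩ :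
              FinQuiv.TotalPath Q) with
            | some wq => Finsupp.single wq c
            | none => 0)
        = ρ.sum fun w c => Finsupp.single w c := by
          refine Finsupp.sum_congr fun w hw => ?_
          simp only [this w hw]
      _ = ρ := Finsupp.sum_single ρ
  rw [hr]
  unfold pmul
  have : ∀ w ∈ ρ.support,
      (TotalPath.comp? (⟨w₀.1, w₀.1, Path.nil w₀.1⟩ : FinQuiv.TotalPath Q) w) = some w := by
    intro w hw
    have hsrc : w.1 = w₀.1 := (P.rels_parallel ρ hρ w hw w₀ hw₀).1
    rw [← hsrc]
    exact comp?_nil_left w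
  calc ρ = ρ.sum fun w c => Finsupp.single w c := (Finsupp.sum_single ρ).symm
    _ = _ := by
        refine Finsupp.sum_congr fun w hw => ?_
        simp only [this w hw]

theorem AdmissiblePresentation.evalFun_rels_zero (P : AdmissiblePresentation K Q Λ)
    {ρ : KQMod K Q} (hρ : ρ ∈ P.rels) : evalFun P.e P.arrow ρ = 0 :=
  (P.ker_eq ρ).mpr (P.mem_idealSpan_self hρ)

variable (P : AdmissiblePresentation K Q Λ) (R : GoodRep K Q B)

/-- The algebra map `Λ → B` induced by a representation killing the relations. -/
noncomputable def AdmissiblePresentation.lift (x : Λ) : B :=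
  evalFun R.e R.ar (P.exists_eval x).choose

variable (hR : ∀ ρ ∈ P.rels, evalFun R.e R.ar ρ = 0)
include hR

theorem AdmissiblePresentation.lift_evalFun (ξ : KQMod K Q) :
    P.lift R (evalFun P.e P.arrow ξ) = evalFun R.e R.ar ξ := by
  set x := evalFun P.e P.arrow ξ with hx
  have hch : evalFun P.e P.arrow (P.exists_eval x).choose = x := (P.exists_eval x).choose_spec
  have hker : (P.exists_eval x).choose - ξ ∈ idealSpan K Q P.rels := by
    rw [← P.ker_eq, evalFun_sub, hch, hx, sub_self]
  have h0 : evalFun R.e R.ar ((P.exists_eval x).choose - ξ) = 0 :=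
    evalFun_eq_zero_of_mem_idealSpan R hR hker
  rw [evalFun_sub] at h0
  have := sub_eq_zero.mp h0
  exact this

theorem AdmissiblePresentation.lift_add (x y : Λ) :
    P.lift R (x + y) = P.lift R x + P.lift R y := by
  obtain ⟨ξ, hξ⟩ := P.exists_eval x
  obtain ⟨η, hη⟩ := P.exists_eval y
  rw [← hξ, ← hη, ← evalFun_add, P.lift_evalFun R hR, P.lift_evalFun R hR,
    P.lift_evalFun R hR, evalFun_add]

theorem AdmissiblePresentation.lift_smul (c : K) (x : Λ) :
    P.lift R (c • x) = c • P.lift R x := by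
  obtain ⟨ξ, hξ⟩ := P.exists_eval x
  rw [← hξ, ← evalFun_smul, P.lift_evalFun R hR, P.lift_evalFun R hR, evalFun_smul]

theorem AdmissiblePresentation.lift_zero : P.lift R 0 = 0 := by
  have := P.lift_evalFun R hR 0
  rw [evalFun_zero, evalFun_zero] at this
  exact this

theorem AdmissiblePresentation.lift_sub (x y : Λ) :
    P.lift R (x - y) = P.lift R x - P.lift R y := by
  obtain ⟨ξ, hξ⟩ := P.exists_eval x
  obtain ⟨η, hη⟩ := P.exists_eval y
  rw [← hξ, ← hη, ← evalFun_sub, P.lift_evalFun R hR, P.lift_evalFun R hR,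
    P.lift_evalFun R hR, evalFun_sub]

theorem AdmissiblePresentation.lift_mul (x y : Λ) :
    P.lift R (x * y) = P.lift R x * P.lift R y := by
  obtain ⟨ξ, hξ⟩ := P.exists_eval x
  obtain ⟨η, hη⟩ := P.exists_eval y
  have hxy : x * y = evalFun P.e P.arrow (mulKQ ξ η) := by
    have h2 := evalFun_mulKQ P.toGoodRep ξ η
    rw [show P.toGoodRep.e = P.e from rfl, show P.toGoodRep.ar = P.arrow from rfl] at h2
    rw [h2, hξ, hη]
  rw [hxy, P.lift_evalFun R hR, evalFun_mulKQ R, ← hξ, ← hη,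
    P.lift_evalFun R hR, P.lift_evalFun R hR]

theorem AdmissiblePresentation.lift_one : P.lift R 1 = 1 := by
  have h1 : (1 : Λ) = evalFun P.e P.arrow
      (∑ v : Q.V, Finsupp.single (⟨v, v, Path.nil v⟩ : FinQuiv.TotalPath Q) (1 : K)) := by
    rw [evalFun_finset_sum]
    rw [← P.sum_e]
    refine Finset.sum_congr rfl fun v _ => ?_
    exact ((evalFun_single P.e P.arrow (⟨v, v, Path.nil v⟩ : TotalPath Q) (1 : K)).trans
      (one_smul K _)).symm
  rw [h1, P.lift_evalFun R hR, evalFun_finset_sum, ← R.sum_e]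
  refine Finset.sum_congr rfl fun v _ => ?_
  exact (evalFun_single R.e R.ar (⟨v, v, Path.nil v⟩ : TotalPath Q) (1 : K)).trans
    (one_smul K _)

theorem AdmissiblePresentation.lift_arrow (a : Q.A) :
    P.lift R (P.arrow a) = R.ar a := by
  have h1 : P.arrow a = evalFun P.e P.arrow
      (Finsupp.single (FinQuiv.tp1 Q a) (1 : K)) := by
    rw [evalFun_single, one_smul]
    show P.arrow a = P.arrow a * P.e (Q.t a)
    exact (P.toGoodRep.ar_mul_e a).symm
  rw [h1, P.lift_evalFun R hR, evalFun_single, one_smul]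
  show R.ar a * R.e (Q.t a) = R.ar a
  exact R.ar_mul_e a

theorem AdmissiblePresentation.lift_algebraMap (c : K) :
    P.lift R (algebraMap K Λ c) = algebraMap K B c := by
  rw [Algebra.algebraMap_eq_smul_one, P.lift_smul R hR, P.lift_one R hR,
    ← Algebra.algebraMap_eq_smul_one]

end Univ

/-! ### A two-dimensional representation attached to three parallel arrows -/

section Triple

variable (K : Type) [Field K]

/-- Projection to the first coordinate, as an endomorphism of `K × K`. -/
noncomputable def pOne : Module.End K (K × K) :=
  (LinearMap.inl K K K).comp (LinearMap.fst K K K)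

/-- Projection to the second coordinate. -/
noncomputable def pTwo : Module.End K (K × K) :=
  (LinearMap.inr K K K).comp (LinearMap.snd K K K)

/-- The "elementary matrix" `(x, y) ↦ (0, x)`. -/
noncomputable def eTwoOne : Module.End K (K × K) :=
  (LinearMap.inr K K K).comp (LinearMap.fst K K K)

@[simp] theorem pOne_apply (m : K × K) : pOne K m = (m.1, 0) := rfl
@[simp] theorem pTwo_apply (m : K × K) : pTwo K m = (0, m.2) := rfl
@[simp] theorem eTwoOne_apply (m : K × K) : eTwoOne K m = (0, m.1) := rfl

theorem pOne_mul_pOne : pOne K * pOne K = pOne K :=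
  LinearMap.ext fun m => by
    simp [Module.End.mul_apply, LinearMap.add_apply, Module.End.one_apply, LinearMap.zero_apply,
      Prod.ext_iff]

theorem pTwo_mul_pTwo : pTwo K * pTwo K = pTwo K :=
  LinearMap.ext fun m => by
    simp [Module.End.mul_apply, LinearMap.add_apply, Module.End.one_apply, LinearMap.zero_apply,
      Prod.ext_iff]

theorem pOne_mul_pTwo : pOne K * pTwo K = 0 :=
  LinearMap.ext fun m => by
    simp [Module.End.mul_apply, LinearMap.add_apply, Module.End.one_apply, LinearMap.zero_apply,
      Prod.ext_iff]

theorem pTwo_mul_pOne : pTwo K * pOne K = 0 :=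
  LinearMap.ext fun m => by
    simp [Module.End.mul_apply, LinearMap.add_apply, Module.End.one_apply, LinearMap.zero_apply,
      Prod.ext_iff]

theorem pOne_add_pTwo : pOne K + pTwo K = 1 :=
  LinearMap.ext fun m => by
    simp [Module.End.mul_apply, LinearMap.add_apply, Module.End.one_apply, LinearMap.zero_apply,
      Prod.ext_iff]

theorem pTwo_mul_eTwoOne : pTwo K * eTwoOne K = eTwoOne K :=
  LinearMap.ext fun m => by
    simp [Module.End.mul_apply, LinearMap.add_apply, Module.End.one_apply, LinearMap.zero_apply,
      Prod.ext_iff]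

theorem eTwoOne_mul_pOne : eTwoOne K * pOne K = eTwoOne K :=
  LinearMap.ext fun m => by
    simp [Module.End.mul_apply, LinearMap.add_apply, Module.End.one_apply, LinearMap.zero_apply,
      Prod.ext_iff]

theorem eTwoOne_mul_eTwoOne : eTwoOne K * eTwoOne K = 0 :=
  LinearMap.ext fun m => by
    simp [Module.End.mul_apply, LinearMap.add_apply, Module.End.one_apply, LinearMap.zero_apply,
      Prod.ext_iff]

variable {Q : FinQuiv}

open MulOpposite

/-- The vertex idempotents of the triple representation. -/
noncomputable def tripleE (i j : Q.V) (v : Q.V) : Module.End K (K × K) :=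
  (if v = i then pOne K else 0) + (if v = j then pTwo K else 0)

/-- The arrow maps of the triple representation. -/
noncomputable def tripleA (a1 a2 a3 : Q.A) (s t : K) (a : Q.A) : Module.End K (K × K) :=
  if a = a1 then eTwoOne K else if a = a2 then s • eTwoOne K
    else if a = a3 then t • eTwoOne K else 0

theorem eTwoOne_mul_pTwo : eTwoOne K * pTwo K = 0 :=
  LinearMap.ext fun m => by
    simp [Module.End.mul_apply, LinearMap.add_apply, Module.End.one_apply, LinearMap.zero_apply,
      Prod.ext_iff]

theorem pOne_mul_eTwoOne : pOne K * eTwoOne K = 0 :=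
  LinearMap.ext fun m => by
    simp [Module.End.mul_apply, LinearMap.add_apply, Module.End.one_apply, LinearMap.zero_apply,
      Prod.ext_iff]

theorem tripleE_mul_tripleE (i j v w : Q.V) (hvw : v ≠ w) :
    tripleE K i j w * tripleE K i j v = 0 := by
  unfold tripleE
  split_ifs <;>
    simp_all [mul_add, add_mul, pOne_mul_pOne, pTwo_mul_pTwo, pOne_mul_pTwo, pTwo_mul_pOne]

theorem tripleE_self_mul (i j v : Q.V) :
    tripleE K i j v * tripleE K i j v = tripleE K i j v := by
  unfold tripleE
  split_ifs <;>
    simp_all [mul_add, add_mul, pOne_mul_pOne, pTwo_mul_pTwo, pOne_mul_pTwo, pTwo_mul_pOne]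

theorem tripleE_sandwich (i j : Q.V) :
    tripleE K i j j * (eTwoOne K * tripleE K i j i) = eTwoOne K := by
  unfold tripleE
  by_cases hij : i = j
  · subst hij
    simp only [if_pos rfl, if_true, eq_self_iff_true, pOne_add_pTwo, mul_one, one_mul]
  · rw [if_neg (Ne.symm hij), if_neg hij, if_pos rfl, if_pos rfl, zero_add, add_zero,
      eTwoOne_mul_pOne, pTwo_mul_eTwoOne]

theorem tripleE_sandwich_smul (i j : Q.V) (c : K) :
    tripleE K i j j * ((c • eTwoOne K) * tripleE K i j i) = c • eTwoOne K := by
  rw [smul_mul_assoc, mul_smul_comm, tripleE_sandwich]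

theorem tripleA_mul_tripleA (a1 a2 a3 : Q.A) (s t : K) (a b : Q.A) :
    tripleA K a1 a2 a3 s t a * tripleA K a1 a2 a3 s t b = 0 := by
  unfold tripleA
  split_ifs <;>
    simp [smul_mul_assoc, mul_smul_comm, eTwoOne_mul_eTwoOne]

/-- The representation of `Q` on `K × K` (as a right module, so with values in the
opposite endomorphism algebra) determined by three parallel arrows and scalars `1, s, t`. -/
noncomputable def tripleRep (i j : Q.V) (a1 a2 a3 : Q.A) (s t : K)
    (hs1 : Q.s a1 = i) (ht1 : Q.t a1 = j) (hs2 : Q.s a2 = i) (ht2 : Q.t a2 = j)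
    (hs3 : Q.s a3 = i) (ht3 : Q.t a3 = j) :
    GoodRep K Q (Module.End K (K × K))ᵐᵒᵖ where
  e v := op (tripleE K i j v)
  ar a := op (tripleA K a1 a2 a3 s t a)
  idem v := by
    rw [← op_mul, op_inj]
    exact tripleE_self_mul K i j v
  orth v w hvw := by
    rw [← op_mul, op_eq_zero_iff]
    exact tripleE_mul_tripleE K i j v w hvw
  sum_e := by
    rw [← Finset.op_sum]
    unfold tripleE
    rw [Finset.sum_add_distrib, Finset.sum_ite_eq' Finset.univ i (fun _ => pOne K),
      Finset.sum_ite_eq' Finset.univ j (fun _ => pTwo K), if_pos (Finset.mem_univ i),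
      if_pos (Finset.mem_univ j), pOne_add_pTwo, op_one]
  sandwich a := by
    rw [← op_mul, ← op_mul, op_inj]
    unfold tripleA
    split_ifs with h1 h2 h3
    · subst h1; rw [hs1, ht1]; exact tripleE_sandwich K i j
    · subst h2; rw [hs2, ht2]; exact tripleE_sandwich_smul K i j s
    · subst h3; rw [hs3, ht3]; exact tripleE_sandwich_smul K i j t
    · rw [zero_mul, mul_zero]

theorem tripleRep_ar_mul_ar (i j : Q.V) (a1 a2 a3 : Q.A) (s t : K)
    (hs1 : Q.s a1 = i) (ht1 : Q.t a1 = j) (hs2 : Q.s a2 = i) (ht2 : Q.t a2 = j)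
    (hs3 : Q.s a3 = i) (ht3 : Q.t a3 = j) (a b : Q.A) :
    (tripleRep K i j a1 a2 a3 s t hs1 ht1 hs2 ht2 hs3 ht3).ar a *
      (tripleRep K i j a1 a2 a3 s t hs1 ht1 hs2 ht2 hs3 ht3).ar b = 0 := by
  show op (tripleA K a1 a2 a3 s t a) * op (tripleA K a1 a2 a3 s t b) = 0
  rw [← op_mul, op_eq_zero_iff]
  exact tripleA_mul_tripleA K a1 a2 a3 s t b a

end Triple

/-! ### Vanishing of long paths, and the module structure coming from a representation -/

section ModFromRep

open MulOpposite

variable {K : Type} [Field K] {Q : FinQuiv} {B : Type} [Ring B] [Algebra K B]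

theorem GoodRep.pathEval_eq_zero_of_two_le (R : GoodRep K Q B)
    (har : ∀ a b : Q.A, R.ar a * R.ar b = 0) :
    ∀ {u v : Q.V} (p : FinQuiv.Path Q u v), 2 ≤ pathLength p → pathEval R.e R.ar p = 0 := by
  intro u v p h2
  match p with
  | .nil _ => simp [pathLength] at h2
  | .cons a hs (.nil _) => simp [pathLength] at h2
  | .cons a hs (.cons b hs' p) =>
      show R.ar a * (R.ar b * pathEval R.e R.ar p) = 0
      rw [← mul_assoc, har a b, zero_mul]

theorem GoodRep.evalFun_eq_zero_of_len (R : GoodRep K Q B)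
    (har : ∀ a b : Q.A, R.ar a * R.ar b = 0) {ρ : KQMod K Q}
    (hlen : ∀ w ∈ ρ.support, 2 ≤ TotalPath.len w) : evalFun R.e R.ar ρ = 0 := by
  unfold evalFun
  calc ρ.sum (fun w c => c • pathEvalT R.e R.ar w) = ρ.sum fun _ _ => (0 : B) := by
        refine Finsupp.sum_congr fun w hw => ?_
        rw [show pathEvalT R.e R.ar w = 0 from
          R.pathEval_eq_zero_of_two_le har w.2.2 (hlen w hw), smul_zero]
    _ = 0 := Finset.sum_const_zero

variable {Λ : Type} [Ring Λ] [Algebra K Λ]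
variable (P : AdmissiblePresentation K Q Λ) {M : Type} [AddCommGroup M] [Module K M]
variable (R : GoodRep K Q (Module.End K M)ᵐᵒᵖ)
variable (hR : ∀ ρ ∈ P.rels, evalFun R.e R.ar ρ = 0)

/-- The right `Λ`-module structure on `M` induced by a representation of the quiver. -/
noncomputable def repModule : Module Λᵐᵒᵖ M where
  smul x m := (P.lift R x.unop).unop m
  one_smul m := by
    show (P.lift R (1 : Λᵐᵒᵖ).unop).unop m = m
    rw [unop_one, P.lift_one R hR, unop_one, Module.End.one_apply]
  mul_smul x y m := by
    show (P.lift R (x * y).unop).unop m = (P.lift R x.unop).unop ((P.lift R y.unop).unop m)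
    rw [unop_mul, P.lift_mul R hR, unop_mul, Module.End.mul_apply]
  smul_zero x := map_zero _
  smul_add x m n := map_add _ _ _
  add_smul x y m := by
    show (P.lift R (x + y).unop).unop m = (P.lift R x.unop).unop m + (P.lift R y.unop).unop m
    rw [unop_add, P.lift_add R hR, unop_add, LinearMap.add_apply]
  zero_smul m := by
    show (P.lift R (0 : Λᵐᵒᵖ).unop).unop m = 0
    rw [unop_zero, P.lift_zero R hR, unop_zero, LinearMap.zero_apply]

end ModFromRep

/-! ### Properties of the triple module -/

section Props

open MulOpposite

variable {K : Type} [Field K] {Q : FinQuiv} {Λ : Type} [Ring Λ] [Algebra K Λ]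
variable (P : AdmissiblePresentation K Q Λ)
variable (R : GoodRep K Q (Module.End K (K × K))ᵐᵒᵖ)
variable (a1 a2 a3 : Q.A) (s t : K)
variable [instM : Module Λᵐᵒᵖ (K × K)]

section A1

variable (hR : ∀ ρ ∈ P.rels, evalFun R.e R.ar ρ = 0)
variable (hsmul : ∀ (x : Λ) (m : K × K), (op x) • m = (P.lift R x).unop m)
include hR hsmul

theorem smul_arrow1 (hA1 : R.ar a1 = op (eTwoOne K)) (m : K × K) :
    (op (P.arrow a1)) • m = ((0 : K), m.1) := by
  rw [hsmul, P.lift_arrow R hR, hA1]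
  rfl

theorem smul_arrow2 (hA2 : R.ar a2 = op (s • eTwoOne K)) (m : K × K) :
    (op (P.arrow a2)) • m = ((0 : K), s * m.1) := by
  rw [hsmul, P.lift_arrow R hR, hA2]
  show (s • eTwoOne K) m = _
  rw [LinearMap.smul_apply, eTwoOne_apply, Prod.smul_mk, smul_zero, smul_eq_mul]

theorem smul_arrow3 (hA3 : R.ar a3 = op (t • eTwoOne K)) (m : K × K) :
    (op (P.arrow a3)) • m = ((0 : K), t * m.1) := by
  rw [hsmul, P.lift_arrow R hR, hA3]
  show (t • eTwoOne K) m = _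
  rw [LinearMap.smul_apply, eTwoOne_apply, Prod.smul_mk, smul_zero, smul_eq_mul]

theorem smul_algebraMap' (c : K) (m : K × K) :
    (op (algebraMap K Λ c)) • m = c • m := by
  rw [hsmul, P.lift_algebraMap R hR]
  have : algebraMap K (Module.End K (K × K))ᵐᵒᵖ c
      = op (algebraMap K (Module.End K (K × K)) c) := rfl
  rw [this, unop_op, Module.algebraMap_end_apply]

theorem tripleFinite : Module.Finite Λᵐᵒᵖ (K × K) := by
  classical
  refine ⟨⟨{((1 : K), (0 : K)), ((0 : K), (1 : K))}, ?_⟩⟩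
  rw [eq_top_iff]
  intro m _
  have hm : m = (op (algebraMap K Λ m.1)) • (((1 : K), (0 : K)) : K × K)
      + (op (algebraMap K Λ m.2)) • (((0 : K), (1 : K)) : K × K) := by
    rw [smul_algebraMap' P R hR hsmul, smul_algebraMap' P R hR hsmul]
    apply Prod.ext <;> simp
  rw [hm]
  refine add_mem (Submodule.smul_mem _ _ (Submodule.subset_span ?_))
    (Submodule.smul_mem _ _ (Submodule.subset_span ?_)) <;> simp

theorem tripleIndec (hA1 : R.ar a1 = op (eTwoOne K))
    (U V : Submodule Λᵐᵒᵖ (K × K)) (hUV : IsCompl U V) :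
    U = ⊥ ∨ V = ⊥ := by
  classical
  set f : (K × K) →ₗ[Λᵐᵒᵖ] (K × K) := U.subtype.comp (U.linearProjOfIsCompl V hUV) with hf
  have hfU : ∀ u ∈ U, f u = u := by
    intro u hu
    have h1 : U.linearProjOfIsCompl V hUV u = ⟨u, hu⟩ :=
      Submodule.linearProjOfIsCompl_apply_left hUV ⟨u, hu⟩
    simp [hf, h1]
  have hfV : ∀ v ∈ V, f v = 0 := by
    intro v hv
    have h1 : U.linearProjOfIsCompl V hUV v = 0 :=
      Submodule.linearProjOfIsCompl_apply_right' hUV hv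
    simp [hf, h1]
  have hrange : ∀ m : K × K, f m ∈ U := fun m => (U.linearProjOfIsCompl V hUV m).2
  have hidem : ∀ m : K × K, f (f m) = f m := fun m => hfU _ (hrange m)
  have hKlin : ∀ (c : K) (m : K × K), f (c • m) = c • f m := by
    intro c m
    rw [← smul_algebraMap' P R hR hsmul, ← smul_algebraMap' P R hR hsmul, map_smul]
  have hcomm : ∀ m : K × K, f (((0 : K), m.1)) = ((0 : K), (f m).1) := by
    intro m
    rw [← smul_arrow1 P R a1 hR hsmul hA1, map_smul, smul_arrow1 P R a1 hR hsmul hA1]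
  have hexp : ∀ m : K × K, f m = m.1 • f ((1 : K), (0 : K)) + m.2 • f ((0 : K), (1 : K)) := by
    intro m
    rw [← hKlin, ← hKlin, ← map_add]
    congr 1
    apply Prod.ext <;> simp
  obtain ⟨A, C, hAC⟩ : ∃ A C : K, f ((1 : K), (0 : K)) = (A, C) := ⟨_, _, rfl⟩
  have hf01 : f ((0 : K), (1 : K)) = ((0 : K), A) := by
    have h1 := hcomm ((1 : K), (0 : K))
    rw [hAC] at h1
    simpa using h1
  have hidem1 := hidem ((1 : K), (0 : K))
  rw [hAC, hexp (A, C), hAC, hf01] at hidem1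
  have hA2 : A * A = A := by
    have := congrArg Prod.fst hidem1
    simpa [smul_eq_mul] using this
  have hACC : A * C + C * A = C := by
    have := congrArg Prod.snd hidem1
    simpa [smul_eq_mul] using this
  have hA01 : A = 0 ∨ A = 1 := by
    have h0 : A * (A - 1) = 0 := by rw [mul_sub, mul_one, hA2, sub_self]
    rcases mul_eq_zero.mp h0 with h | h
    · exact Or.inl h
    · exact Or.inr (sub_eq_zero.mp h)
  have hC0 : C = 0 := by
    rcases hA01 with h | h
    · rw [h, zero_mul, mul_zero, zero_add] at hACC
      exact hACC.symm
    · rw [h, one_mul, mul_one] at hACC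
      have h2 : C + C = C + 0 := by rw [add_zero]; exact hACC
      exact add_left_cancel h2
  rcases hA01 with h | h
  · left
    rw [eq_bot_iff]
    intro u hu
    have h1 : u = f u := (hfU u hu).symm
    rw [hexp u, hAC, hf01, hC0, h] at h1
    rw [Submodule.mem_bot]
    simpa [Prod.ext_iff] using h1
  · right
    rw [eq_bot_iff]
    intro v hv
    have h0 : f v = 0 := hfV v hv
    rw [hexp v, hAC, hf01, hC0, h] at h0
    rw [Submodule.mem_bot]
    have : (v.1, v.2) = ((0 : K), (0 : K)) := by
      have h1 := congrArg Prod.fst h0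
      have h2 := congrArg Prod.snd h0
      simp only [Prod.ext_iff]
      constructor
      · simpa [smul_eq_mul] using h1
      · simpa [smul_eq_mul] using h2
    calc v = (v.1, v.2) := rfl
      _ = ((0 : K), (0 : K)) := this
      _ = 0 := rfl

end A1

end Props



/-! ### Coordinates and the range of `polyShift` -/

section PolyShift

open MulOpposite Polynomial

variable {K : Type} [Field K] {Λ : Type} [Ring Λ]
variable {M : Type} [AddCommGroup M] [Module (Polynomial K) M] [Module Λᵐᵒᵖ M]
variable [SMulCommClass (Polynomial K) Λᵐᵒᵖ M]
variable (lam : K) {ι : Type} [Fintype ι] (b : Module.Basis ι (Polynomial K) M)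

theorem polyShift_apply (m : M) :
    polyShift (K := K) (Λ := Λ) lam m = (Polynomial.X - Polynomial.C lam) • m := rfl

theorem mem_range_polyShift_iff (x : M) :
    x ∈ LinearMap.range (polyShift (K := K) (Λ := Λ) (M := M) lam) ↔
      ∀ v, Polynomial.eval lam (b.repr x v) = 0 := by
  constructor
  · rintro ⟨w, rfl⟩
    intro v
    rw [polyShift_apply, map_smul, Finsupp.smul_apply, smul_eq_mul, Polynomial.eval_mul,
      Polynomial.eval_sub, Polynomial.eval_X, Polynomial.eval_C, sub_self, zero_mul]
  · intro h
    have hdvd : ∀ v, Polynomial.X - Polynomial.C lam ∣ b.repr x v := fun v =>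
      Polynomial.dvd_iff_isRoot.mpr (h v)
    choose q hq using hdvd
    refine ⟨∑ v, q v • b v, ?_⟩
    rw [polyShift_apply, Finset.smul_sum]
    calc ∑ v, (Polynomial.X - Polynomial.C lam) • q v • b v
        = ∑ v, b.repr x v • b v := by
          refine Finset.sum_congr rfl fun v _ => ?_
          rw [smul_smul, ← hq v]
      _ = x := b.sum_repr x

theorem range_polyShift_smul (q : Polynomial K) {x : M}
    (hx : x ∈ LinearMap.range (polyShift (K := K) (Λ := Λ) (M := M) lam)) :
    q • x ∈ LinearMap.range (polyShift (K := K) (Λ := Λ) (M := M) lam) := by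
  obtain ⟨w, rfl⟩ := hx
  refine ⟨q • w, ?_⟩
  rw [polyShift_apply, polyShift_apply, smul_smul, smul_smul, mul_comm]

theorem smul_mem_range_of_basis {y : Λ}
    (h : ∀ u, (op y) • b u ∈ LinearMap.range (polyShift (K := K) (Λ := Λ) (M := M) lam))
    (w : M) : (op y) • w ∈ LinearMap.range (polyShift (K := K) (Λ := Λ) (M := M) lam) := by
  have hw : (op y) • w = ∑ v, (b.repr w v) • ((op y) • b v) := by
    conv_lhs => rw [← b.sum_repr w]
    rw [Finset.smul_sum]
    exact Finset.sum_congr rfl fun v _ => (smul_comm (b.repr w v) (op y) (b v)).symm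
  rw [hw]
  exact Submodule.sum_mem _ fun v _ => range_polyShift_smul lam (q := b.repr w v) (h v)

end PolyShift

end Aux

/-- The Gabriel quiver of a tame finite-dimensional algebra has at most two arrows between
any two vertices. -/
theorem at_most_two_parallel_arrows
    (K : Type) [Field K] [IsAlgClosed K]
    (Λ : Type) [Ring Λ] [Algebra K Λ] [FiniteDimensional K Λ]
    (Q : FinQuiv) (P : AdmissiblePresentation K Q Λ)
    (hind : IndecAlg Λ) (htame : IsTame K Λ) :
    ∀ i j : Q.V, (Finset.univ.filter fun a : Q.A => Q.s a = i ∧ Q.t a = j).card ≤ 2 := by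
  classical
  intro i j
  by_contra hcard
  push_neg at hcard
  have h3 : 3 ≤ (Finset.univ.filter fun a : Q.A => Q.s a = i ∧ Q.t a = j).card := hcard
  obtain ⟨T, hTsub, hTcard⟩ :=
    Finset.exists_subset_card_eq (s := Finset.univ.filter fun a : Q.A => Q.s a = i ∧ Q.t a = j) h3
  obtain ⟨a1, a2, a3, h12, h13, h23, hTeq⟩ := Finset.card_eq_three.mp hTcard
  have mem1 : a1 ∈ T := by rw [hTeq]; simp
  have mem2 : a2 ∈ T := by rw [hTeq]; simp
  have mem3 : a3 ∈ T := by rw [hTeq]; simp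
  have hst1 := (Finset.mem_filter.mp (hTsub mem1)).2
  have hst2 := (Finset.mem_filter.mp (hTsub mem2)).2
  have hst3 := (Finset.mem_filter.mp (hTsub mem3)).2
  obtain ⟨hs1, ht1⟩ := hst1
  obtain ⟨hs2, ht2⟩ := hst2
  obtain ⟨hs3, ht3⟩ := hst3
  -- tame witnesses in the relevant dimension
  obtain ⟨n, W, hW⟩ := htame (Module.finrank K (K × K))
  -- bases of the witnesses and coordinate polynomials of the arrow actions
  let bas : (m : Fin n) →
      Module.Basis (Fin (Module.finrank (Polynomial K) (W m).M)) (Polynomial K) (W m).M := fun m =>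
    letI := (W m).free
    letI := (W m).finite
    Module.finBasis _ _
  let F : (m : Fin n) → Q.A → (u v : Fin (Module.finrank (Polynomial K) (W m).M)) →
      Polynomial K := fun m a u v =>
    (bas m).repr (MulOpposite.op (P.arrow a) • (bas m) u) v
  -- choice of the parameter `s`
  have hSfin : {s' : K | ∃ m u v, F m a1 u v ≠ 0 ∧
      F m a2 u v = Polynomial.C s' * F m a1 u v}.Finite := by
    have hsub : {s' : K | ∃ m u v, F m a1 u v ≠ 0 ∧
          F m a2 u v = Polynomial.C s' * F m a1 u v} ⊆
        ⋃ z : Σ m : Fin n, Fin (Module.finrank (Polynomial K) (W m).M) ×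
          Fin (Module.finrank (Polynomial K) (W m).M),
          {s' : K | F z.1 a1 z.2.1 z.2.2 ≠ 0 ∧
            F z.1 a2 z.2.1 z.2.2 = Polynomial.C s' * F z.1 a1 z.2.1 z.2.2} := by
      rintro s' ⟨m, u, v, h1, h2⟩
      exact Set.mem_iUnion.mpr ⟨⟨m, u, v⟩, h1, h2⟩
    refine Set.Finite.subset (Set.finite_iUnion fun z => Set.Subsingleton.finite ?_) hsub
    rintro x ⟨hne, hx⟩ y ⟨_, hy⟩
    have hxy : (Polynomial.C x - Polynomial.C y) * F z.1 a1 z.2.1 z.2.2 = 0 := by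
      rw [sub_mul, ← hx, ← hy, sub_self]
    rcases mul_eq_zero.mp hxy with h | h
    · have := sub_eq_zero.mp h
      exact Polynomial.C_injective this
    · exact absurd h hne
  obtain ⟨s, hs⟩ : ∃ s' : K, s' ∉ {s' : K | ∃ m u v, F m a1 u v ≠ 0 ∧
      F m a2 u v = Polynomial.C s' * F m a1 u v} := by
    obtain ⟨s', hs'⟩ := (hSfin.infinite_compl).nonempty
    exact ⟨s', hs'⟩
  -- choice of the parameter `t`
  have hTfin : {t' : K | ∃ m u v lam, Polynomial.eval lam (F m a1 u v) ≠ 0 ∧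
      (F m a2 u v - Polynomial.C s * F m a1 u v) ≠ 0 ∧
      Polynomial.eval lam (F m a2 u v - Polynomial.C s * F m a1 u v) = 0 ∧
      t' * Polynomial.eval lam (F m a1 u v) = Polynomial.eval lam (F m a3 u v)}.Finite := by
    have hsub : {t' : K | ∃ m u v lam, Polynomial.eval lam (F m a1 u v) ≠ 0 ∧
          (F m a2 u v - Polynomial.C s * F m a1 u v) ≠ 0 ∧
          Polynomial.eval lam (F m a2 u v - Polynomial.C s * F m a1 u v) = 0 ∧
          t' * Polynomial.eval lam (F m a1 u v) = Polynomial.eval lam (F m a3 u v)} ⊆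
        ⋃ z : Σ m : Fin n, Fin (Module.finrank (Polynomial K) (W m).M) ×
          Fin (Module.finrank (Polynomial K) (W m).M),
          {t' : K | ∃ lam, Polynomial.eval lam (F z.1 a1 z.2.1 z.2.2) ≠ 0 ∧
            (F z.1 a2 z.2.1 z.2.2 - Polynomial.C s * F z.1 a1 z.2.1 z.2.2) ≠ 0 ∧
            Polynomial.eval lam (F z.1 a2 z.2.1 z.2.2 - Polynomial.C s * F z.1 a1 z.2.1 z.2.2)
              = 0 ∧
            t' * Polynomial.eval lam (F z.1 a1 z.2.1 z.2.2)
              = Polynomial.eval lam (F z.1 a3 z.2.1 z.2.2)} := by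
      rintro t' ⟨m, u, v, lam, h1, h2, h3', h4⟩
      exact Set.mem_iUnion.mpr ⟨⟨m, u, v⟩, lam, h1, h2, h3', h4⟩
    refine Set.Finite.subset (Set.finite_iUnion fun z => ?_) hsub
    by_cases hG : F z.1 a2 z.2.1 z.2.2 - Polynomial.C s * F z.1 a1 z.2.1 z.2.2 = 0
    · have : {t' : K | ∃ lam, Polynomial.eval lam (F z.1 a1 z.2.1 z.2.2) ≠ 0 ∧
          (F z.1 a2 z.2.1 z.2.2 - Polynomial.C s * F z.1 a1 z.2.1 z.2.2) ≠ 0 ∧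
          Polynomial.eval lam (F z.1 a2 z.2.1 z.2.2 - Polynomial.C s * F z.1 a1 z.2.1 z.2.2)
            = 0 ∧
          t' * Polynomial.eval lam (F z.1 a1 z.2.1 z.2.2)
            = Polynomial.eval lam (F z.1 a3 z.2.1 z.2.2)} = ∅ := by
        ext t'
        simp only [Set.mem_setOf_eq, Set.mem_empty_iff_false, iff_false]
        rintro ⟨lam, _, h2, _, _⟩
        exact h2 hG
      rw [this]
      exact Set.finite_empty
    · refine Set.Finite.subset (((Polynomial.finite_setOf_isRoot hG).image
        (fun lam => Polynomial.eval lam (F z.1 a3 z.2.1 z.2.2) /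
          Polynomial.eval lam (F z.1 a1 z.2.1 z.2.2)))) ?_
      rintro t' ⟨lam, h1, _, h3', h4⟩
      exact ⟨lam, h3', ((eq_div_iff h1).mpr h4).symm⟩
  obtain ⟨t, ht⟩ : ∃ t' : K, t' ∉ {t' : K | ∃ m u v lam,
      Polynomial.eval lam (F m a1 u v) ≠ 0 ∧
      (F m a2 u v - Polynomial.C s * F m a1 u v) ≠ 0 ∧
      Polynomial.eval lam (F m a2 u v - Polynomial.C s * F m a1 u v) = 0 ∧
      t' * Polynomial.eval lam (F m a1 u v) = Polynomial.eval lam (F m a3 u v)} := by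
    obtain ⟨t', ht'⟩ := (hTfin.infinite_compl).nonempty
    exact ⟨t', ht'⟩
  -- the two-dimensional module
  set R : GoodRep K Q (Module.End K (K × K))ᵐᵒᵖ :=
    tripleRep K i j a1 a2 a3 s t hs1 ht1 hs2 ht2 hs3 ht3 with hRdef
  have hRar : ∀ a b : Q.A, R.ar a * R.ar b = 0 :=
    tripleRep_ar_mul_ar K i j a1 a2 a3 s t hs1 ht1 hs2 ht2 hs3 ht3
  have hR : ∀ ρ ∈ P.rels, evalFun R.e R.ar ρ = 0 := fun ρ hρ =>
    R.evalFun_eq_zero_of_len hRar (P.rels_len ρ hρ)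
  letI instM : Module Λᵐᵒᵖ (K × K) := repModule P R hR
  have hsmul : ∀ (x : Λ) (mm : K × K),
      (MulOpposite.op x) • mm = (P.lift R x).unop mm := fun x mm => rfl
  have hA1 : R.ar a1 = MulOpposite.op (eTwoOne K) := by
    show MulOpposite.op (tripleA K a1 a2 a3 s t a1) = _
    unfold tripleA
    rw [if_pos rfl]
  have hA2 : R.ar a2 = MulOpposite.op (s • eTwoOne K) := by
    show MulOpposite.op (tripleA K a1 a2 a3 s t a2) = _
    unfold tripleA
    rw [if_neg (Ne.symm h12), if_pos rfl]
  have hA3 : R.ar a3 = MulOpposite.op (t • eTwoOne K) := by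
    show MulOpposite.op (tripleA K a1 a2 a3 s t a3) = _
    unfold tripleA
    rw [if_neg (Ne.symm h13), if_neg (Ne.symm h23), if_pos rfl]
  letI : Module.Finite Λᵐᵒᵖ (K × K) := tripleFinite P R hR hsmul
  set Mp : ModuleCat.{0} Λᵐᵒᵖ := ModuleCat.of Λᵐᵒᵖ (K × K) with hMp
  have hfin : Module.Finite Λᵐᵒᵖ Mp := tripleFinite P R hR hsmul
  have hindec : IndecMod Mp := by
    constructor
    · exact ⟨((1 : K), (0 : K)), 0, fun h => one_ne_zero (congrArg Prod.fst h)⟩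
    · intro U V hUV
      exact tripleIndec P R a1 hR hsmul hA1 U V hUV
  have hkdim : kdim K Mp = Module.finrank K (K × K) := by
    unfold kdim
    letI mInst : Module K ↥Mp := Module.compHom ↥Mp (algebraMap K Λᵐᵒᵖ)
    show Module.finrank K ↥Mp = @Module.finrank K (K × K) _ _ Prod.instModule
    exact @LinearEquiv.finrank_eq K ↥Mp (K × K) _ _ mInst _ Prod.instModule
      (@AddEquiv.toLinearEquiv K ↥Mp (K × K) _ _ _ mInst Prod.instModule (AddEquiv.refl _)
        (fun c mm => by
          have h := smul_algebraMap' P R hR hsmul c mm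
          have h2 : (algebraMap K Λᵐᵒᵖ) c • mm = MulOpposite.op ((algebraMap K Λ) c) • mm := by
            rw [MulOpposite.algebraMap_apply]
          exact h2.trans h))
  obtain ⟨m, lam, ⟨ψ⟩⟩ := hW Mp hfin hindec hkdim
  letI := (W m).free
  letI := (W m).finite
  -- transporting zero actions through the isomorphism
  have transport : ∀ y : Λ, (∀ mm : K × K, (MulOpposite.op y) • mm = 0) →
      ∀ w : (W m).M, (MulOpposite.op y) • w ∈
        LinearMap.range (polyShift (K := K) (Λ := Λ) (M := (W m).M) lam) := by
    intro y hy w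
    have h1 : ∀ nn : ((W m).M ⧸
        LinearMap.range (polyShift (K := K) (Λ := Λ) (M := (W m).M) lam)),
        (MulOpposite.op y) • nn = 0 := by
      intro nn
      obtain ⟨mm, rfl⟩ := ψ.surjective nn
      rw [← map_smul, hy, map_zero]
    have h2 := h1 (Submodule.Quotient.mk w)
    rwa [← Submodule.Quotient.mk_smul, Submodule.Quotient.mk_eq_zero] at h2
  -- splitting of the action of the elements `alg c * arrow a` on the witness module
  have hysplit : ∀ (c : K) (a : Q.A) (w : (W m).M),
      (MulOpposite.op (algebraMap K Λ c * P.arrow a)) • w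
        = Polynomial.C c • ((MulOpposite.op (P.arrow a)) • w) := by
    intro c a w
    rw [MulOpposite.op_mul, mul_smul, ← (W m).compat]
    exact (smul_comm (Polynomial.C c) (MulOpposite.op (P.arrow a)) w).symm
  -- the two relations killed by the module `Mp`
  have hy12 : ∀ mm : K × K,
      (MulOpposite.op (algebraMap K Λ s * P.arrow a1 - algebraMap K Λ (1 : K) * P.arrow a2)) • mm
        = 0 := by
    intro mm
    rw [MulOpposite.op_sub, sub_smul, MulOpposite.op_mul, MulOpposite.op_mul, mul_smul,
      mul_smul, smul_algebraMap' P R hR hsmul, smul_algebraMap' P R hR hsmul,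
      smul_arrow1 P R a1 hR hsmul hA1, smul_arrow2 P R a2 s hR hsmul hA2]
    simp [Prod.ext_iff, smul_eq_mul]
  have hy13 : ∀ mm : K × K,
      (MulOpposite.op (algebraMap K Λ t * P.arrow a1 - algebraMap K Λ (1 : K) * P.arrow a3)) • mm
        = 0 := by
    intro mm
    rw [MulOpposite.op_sub, sub_smul, MulOpposite.op_mul, MulOpposite.op_mul, mul_smul,
      mul_smul, smul_algebraMap' P R hR hsmul, smul_algebraMap' P R hR hsmul,
      smul_arrow1 P R a1 hR hsmul hA1, smul_arrow3 P R a3 t hR hsmul hA3]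
    simp [Prod.ext_iff, smul_eq_mul]
  -- coordinate consequences
  have hcoord : ∀ (c : K) (a : Q.A), (∀ mm : K × K,
      (MulOpposite.op (algebraMap K Λ c * P.arrow a1 - algebraMap K Λ (1 : K) * P.arrow a)) • mm
        = 0) →
      ∀ u v, c * Polynomial.eval lam (F m a1 u v) = Polynomial.eval lam (F m a u v) := by
    intro c a hy u v
    have h1 := transport _ hy ((bas m) u)
    rw [mem_range_polyShift_iff lam (bas m)] at h1
    have h2 := h1 v
    have h3 : (MulOpposite.op (algebraMap K Λ c * P.arrow a1
        - algebraMap K Λ (1 : K) * P.arrow a)) • ((bas m) u)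
        = Polynomial.C c • ((MulOpposite.op (P.arrow a1)) • ((bas m) u))
          - Polynomial.C (1 : K) • ((MulOpposite.op (P.arrow a)) • ((bas m) u)) := by
      rw [MulOpposite.op_sub, sub_smul, hysplit, hysplit]
    rw [h3, map_sub, LinearEquiv.map_smul, LinearEquiv.map_smul] at h2
    have h4 : Polynomial.eval lam (Polynomial.C c * F m a1 u v
        - Polynomial.C (1 : K) * F m a u v) = 0 := by
      rw [← h2]
      congr 1
    rw [Polynomial.eval_sub, Polynomial.eval_mul, Polynomial.eval_mul, Polynomial.eval_C,
      Polynomial.eval_C, one_mul, sub_eq_zero] at h4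
    exact h4
  have h12' := hcoord s a2 hy12
  have h13' := hcoord t a3 hy13
  -- nonvanishing of the action of `a1`
  have hnon : ∃ u v, Polynomial.eval lam (F m a1 u v) ≠ 0 := by
    by_contra hall
    push_neg at hall
    have hmem : ∀ u, (MulOpposite.op (P.arrow a1)) • (bas m) u ∈
        LinearMap.range (polyShift (K := K) (Λ := Λ) (M := (W m).M) lam) := by
      intro u
      rw [mem_range_polyShift_iff lam (bas m)]
      intro v
      exact hall u v
    have hallw := smul_mem_range_of_basis lam (bas m) hmem
    have hq : ∀ nn : ((W m).M ⧸
        LinearMap.range (polyShift (K := K) (Λ := Λ) (M := (W m).M) lam)),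
        (MulOpposite.op (P.arrow a1)) • nn = 0 := by
      intro nn
      obtain ⟨w, rfl⟩ := Submodule.Quotient.mk_surjective _ nn
      rw [← Submodule.Quotient.mk_smul, Submodule.Quotient.mk_eq_zero]
      exact hallw w
    have h5 : (MulOpposite.op (P.arrow a1)) • (((1 : K), (0 : K)) : K × K) = 0 := by
      apply ψ.injective
      rw [map_smul, hq, map_zero]
    rw [smul_arrow1 P R a1 hR hsmul hA1] at h5
    have := congrArg Prod.snd h5
    simp at this
  obtain ⟨u, v, hne⟩ := hnon
  -- derive the contradiction with the choice of `s` and `t`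
  have hF1ne : F m a1 u v ≠ 0 := fun h0 => hne (by rw [h0]; simp)
  have hGne : F m a2 u v - Polynomial.C s * F m a1 u v ≠ 0 := by
    intro hG0
    exact hs ⟨m, u, v, hF1ne, sub_eq_zero.mp hG0⟩
  have hGroot : Polynomial.eval lam (F m a2 u v - Polynomial.C s * F m a1 u v) = 0 := by
    rw [Polynomial.eval_sub, Polynomial.eval_mul, Polynomial.eval_C, ← h12' u v, sub_self]
  exact ht ⟨m, u, v, lam, hne, hGne, hGroot, h13' u v⟩
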